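/- For probability vectors P, Q on {1,...,k} with p_i > 0 and p_1 ≥ ... ≥ p_k, the minimum of the KL divergence ∑ q_i log(q_i/p_i) over all Q with q_1 = q_2 ≥ q_3 ≥ ... ≥ q_k is attained at q_1 = q_2 = √(p_1 p_2)/η and q_i = p_i/η for i ≥ 3, where η = 2√(p_1 p_2) + 1 - p_1 - p_2, and the minimum value is -log η. -/

import Mathlib

open Real Finset

lemma sum_split {k : ℕ} (f : Fin (k + 2) → ℝ) :
    ∑ i, f i = f 0 + f 1 + ∑ i : Fin k, f i.succ.succ := by
  rw [Fin.sum_univ_succ, Fin.sum_univ_succ, Fin.succ_zero_eq_one]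
  ring

lemma gibbs {n : ℕ} (q r : Fin n → ℝ) (hq : ∀ i, 0 ≤ q i) (hr : ∀ i, 0 < r i)
    (hqs : ∑ i, q i = 1) (hrs : ∑ i, r i = 1) :
    0 ≤ ∑ i, q i * Real.log (q i / r i) := by
  have h : ∀ i, q i - r i ≤ q i * Real.log (q i / r i) := by
    intro i
    rcases eq_or_lt_of_le (hq i) with h0 | h0
    · simp [← h0]
      linarith [(hr i).le]
    · have hlog : Real.log (r i / q i) ≤ r i / q i - 1 :=
        Real.log_le_sub_one_of_pos (div_pos (hr i) h0)
      have hneg : Real.log (q i / r i) = -Real.log (r i / q i) := by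
        rw [← Real.log_inv]
        congr 1
        field_simp
      rw [hneg]
      have hq' : q i ≠ 0 := ne_of_gt h0
      have h2 : q i * (r i / q i) = r i := by field_simp
      nlinarith [hlog, h0]
  have h2 : ∑ i, (q i - r i) ≤ ∑ i, q i * Real.log (q i / r i) :=
    Finset.sum_le_sum fun i _ => h i
  rwa [Finset.sum_sub_distrib, hqs, hrs, sub_self] at h2

/-- The minimizer of the KL divergence over probability vectors `Q` with
`q₁ = q₂` and `q_i ≤ q₁` is `q₁ = q₂ = √(p₁p₂)/η`, `q_i = p_i/η` for `i ≥ 3`,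
where `η = 2√(p₁p₂) + 1 - p₁ - p₂`, with minimum value `-log η`. -/
theorem kl_minimizer (k : ℕ) (P : Fin (k + 2) → ℝ)
    (hPpos : ∀ i, 0 < P i) (hPsum : ∑ i, P i = 1)
    (hPmono : ∀ i j : Fin (k + 2), i ≤ j → P j ≤ P i)
    (η : ℝ) (hη : η = 2 * Real.sqrt (P 0 * P 1) + 1 - P 0 - P 1)
    (Qstar : Fin (k + 2) → ℝ)
    (hQstar : Qstar = fun i =>
      if i = 0 ∨ i = 1 then Real.sqrt (P 0 * P 1) / η else P i / η) :
    ((∀ i, 0 ≤ Qstar i) ∧ (∑ i, Qstar i) = 1 ∧ Qstar 0 = Qstar 1 ∧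
        (∀ i, Qstar i ≤ Qstar 0)) ∧
      (∑ i, Qstar i * Real.log (Qstar i / P i)) = -Real.log η ∧
      (∀ Q : Fin (k + 2) → ℝ, (∀ i, 0 ≤ Q i) → (∑ i, Q i) = 1 → Q 0 = Q 1 →
        (∀ i, Q i ≤ Q 0) →
        -Real.log η ≤ ∑ i, Q i * Real.log (Q i / P i)) := by
  set s := Real.sqrt (P 0 * P 1) with hs_def
  have hP0 := hPpos 0
  have hP1 := hPpos 1
  have hs : 0 < s := Real.sqrt_pos.mpr (mul_pos hP0 hP1)
  -- facts about Fin indices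
  have hne2 : ∀ i : Fin k, ¬(i.succ.succ = 0 ∨ i.succ.succ = 1) := by
    intro i h
    rcases h with h | h
    · exact Fin.succ_ne_zero _ h
    · exact Fin.succ_ne_zero i (Fin.succ_injective _ (h.trans Fin.succ_zero_eq_one.symm))
  have h1le : ∀ i : Fin k, (1 : Fin (k + 2)) ≤ i.succ.succ := by
    intro i
    rw [Fin.le_def]
    simp [Fin.val_one]
  -- values of Qstar
  have hQ0 : Qstar 0 = s / η := by rw [hQstar]; simp
  have hQ1 : Qstar 1 = s / η := by rw [hQstar]; simp
  have hQn : ∀ i : Fin k, Qstar i.succ.succ = P i.succ.succ / η := by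
    intro i; rw [hQstar]; exact if_neg (hne2 i)
  -- sum of tail of P
  have hrest : ∑ i : Fin k, P i.succ.succ = 1 - P 0 - P 1 := by
    have := sum_split P
    rw [hPsum] at this
    linarith
  have hrestnn : (0:ℝ) ≤ ∑ i : Fin k, P i.succ.succ :=
    Finset.sum_nonneg fun i _ => (hPpos _).le
  have hηpos : 0 < η := by rw [hη]; rw [hrest] at hrestnn; linarith
  have hηne : η ≠ 0 := ne_of_gt hηpos
  -- P 1 ≤ s
  have hP1s : P 1 ≤ s := by
    have h01 : P 1 ≤ P 0 := hPmono 0 1 (Fin.zero_le 1)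
    have : Real.sqrt (P 1 * P 1) ≤ s :=
      Real.sqrt_le_sqrt (mul_le_mul_of_nonneg_right h01 hP1.le)
    rwa [Real.sqrt_mul_self hP1.le] at this
  -- positivity of Qstar
  have hQpos : ∀ i, 0 < Qstar i := by
    intro i
    rw [hQstar]
    dsimp only
    split
    · exact div_pos hs hηpos
    · exact div_pos (hPpos i) hηpos
  -- sum of Qstar = 1
  have hQsum : ∑ i, Qstar i = 1 := by
    rw [sum_split Qstar, hQ0, hQ1]
    have : ∑ i : Fin k, Qstar i.succ.succ = (1 - P 0 - P 1) / η := by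
      rw [← hrest, Finset.sum_div]
      exact Finset.sum_congr rfl fun i _ => hQn i
    rw [this]
    have h2 : s / η + s / η + (1 - P 0 - P 1) / η = (2 * s + 1 - P 0 - P 1) / η := by ring
    rw [h2, ← hη, div_self hηne]
  -- log identity: 2 log s = log P0 + log P1
  have hlogs : 2 * Real.log s = Real.log (P 0) + Real.log (P 1) := by
    rw [hs_def, Real.log_sqrt (mul_pos hP0 hP1).le,
      Real.log_mul (ne_of_gt hP0) (ne_of_gt hP1)]
    ring
  -- the value at Qstar
  have hval : (∑ i, Qstar i * Real.log (Qstar i / P i)) = -Real.log η := by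
    rw [sum_split (fun i => Qstar i * Real.log (Qstar i / P i))]
    have htail : ∑ i : Fin k, Qstar i.succ.succ * Real.log (Qstar i.succ.succ / P i.succ.succ)
        = (1 - P 0 - P 1) / η * (-Real.log η) := by
      rw [← hrest]
      rw [Finset.sum_div, Finset.sum_mul]
      refine Finset.sum_congr rfl fun i _ => ?_
      rw [hQn i]
      have hpi := hPpos i.succ.succ
      have h3 : P i.succ.succ / η / P i.succ.succ = η⁻¹ := by
        rw [div_right_comm, div_self (ne_of_gt hpi), one_div]
      rw [h3, Real.log_inv]
    rw [hQ0, hQ1, htail]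
    have hl0 : Real.log (s / η / P 0) = Real.log s - Real.log η - Real.log (P 0) := by
      rw [Real.log_div (by positivity) (ne_of_gt hP0), Real.log_div (ne_of_gt hs) hηne]
    have hl1 : Real.log (s / η / P 1) = Real.log s - Real.log η - Real.log (P 1) := by
      rw [Real.log_div (by positivity) (ne_of_gt hP1), Real.log_div (ne_of_gt hs) hηne]
    rw [hl0, hl1]
    field_simp
    linear_combination s * hlogs + Real.log η * hη
  refine ⟨⟨fun i => (hQpos i).le, hQsum, by rw [hQ0, hQ1], ?_⟩, hval, ?_⟩
  · -- Qstar i ≤ Qstar 0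
    intro i
    rw [hQ0, hQstar]
    dsimp only
    split
    · exact le_refl _
    · next h =>
      push_neg at h
      have h1i : (1 : Fin (k + 2)) ≤ i := by
        rw [Fin.le_def, Fin.val_one]
        have : i.val ≠ 0 := fun hv => h.1 (Fin.ext (by simp [hv]))
        omega
      exact (div_le_div_iff_of_pos_right hηpos).mpr (le_trans (hPmono 1 i h1i) hP1s)
  · -- lower bound
    intro Q hQpos' hQsum' hQ01 _hQle
    have key : ∀ i, Q i * Real.log (Q i / P i)
        = Q i * Real.log (Q i / Qstar i) + Q i * Real.log (Qstar i / P i) := by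
      intro i
      rcases eq_or_lt_of_le (hQpos' i) with h0 | h0
      · rw [← h0]; ring
      · have hqne := (hQpos i).ne'
        have hpne := (hPpos i).ne'
        have h1 : Q i / P i = (Q i / Qstar i) * (Qstar i / P i) := by
          field_simp
        rw [h1, Real.log_mul (div_pos h0 (hQpos i)).ne' (div_pos (hQpos i) (hPpos i)).ne',
          mul_add]
    rw [Finset.sum_congr rfl fun i _ => key i, Finset.sum_add_distrib]
    have hcross : ∑ i, Q i * Real.log (Qstar i / P i) = -Real.log η := by
      rw [sum_split (fun i => Q i * Real.log (Qstar i / P i))]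
      have htail : ∑ i : Fin k, Q i.succ.succ * Real.log (Qstar i.succ.succ / P i.succ.succ)
          = (∑ i : Fin k, Q i.succ.succ) * (-Real.log η) := by
        rw [Finset.sum_mul]
        refine Finset.sum_congr rfl fun i _ => ?_
        rw [hQn i]
        have hpi := hPpos i.succ.succ
        have h3 : P i.succ.succ / η / P i.succ.succ = η⁻¹ := by
          rw [div_right_comm, div_self (ne_of_gt hpi), one_div]
        rw [h3, Real.log_inv]
      have hqrest : ∑ i : Fin k, Q i.succ.succ = 1 - Q 0 - Q 1 := by
        have := sum_split Q
        rw [hQsum'] at this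
        linarith
      rw [hQ0, hQ1, htail, hqrest]
      have hl0 : Real.log (s / η / P 0) = Real.log s - Real.log η - Real.log (P 0) := by
        rw [Real.log_div (by positivity) (ne_of_gt hP0), Real.log_div (ne_of_gt hs) hηne]
      have hl1 : Real.log (s / η / P 1) = Real.log s - Real.log η - Real.log (P 1) := by
        rw [Real.log_div (by positivity) (ne_of_gt hP1), Real.log_div (ne_of_gt hs) hηne]
      rw [hl0, hl1, hQ01]
      linear_combination Q 1 * hlogs
    rw [hcross]
    have := gibbs Q Qstar hQpos' hQpos hQsum' hQsum
    linarith
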